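/- Let (K, v) be a henselian valued field and let F(X,Y) = X^n + b_{n-1}X^{n-1}Y + ... + b_1 XY^{n-1} + b_0 Y^n over O_v be the homogenization of a degree-n polynomial whose reduction x^n + β_{n-1}x^{n-1} + ... + β_0 has no root in the residue field k. Then for all a, b ∈ K and all positive γ ∈ Γ: v(F(a,b)) ≥ γ implies v(a) ≥ γ/n and v(b) ≥ γ/n (i.e., n·v(a) ≥ γ and n·v(b) ≥ γ). -/

import Mathlib

variable {K Γ : Type*} [Field K] [AddCommGroup Γ] [LinearOrder Γ] [IsOrderedAddMonoid Γ]

/-- The valuation ring of an additive valuation on a field. -/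
def valRing (v : AddValuation K (WithTop Γ)) : Subring K where
  carrier := {x | 0 ≤ v x}
  zero_mem' := by simp
  one_mem' := by simp
  add_mem' := fun {a b} ha hb => le_trans (le_min ha hb) (v.map_add a b)
  mul_mem' := fun {a b} ha hb => by
    show (0:WithTop Γ) ≤ v (a*b); rw [v.map_mul]; exact add_nonneg ha hb
  neg_mem' := fun {a} ha => by show (0:WithTop Γ) ≤ v (-a); rw [v.map_neg]; exact ha

lemma nsmul_top_eq {n : ℕ} (hn : 0 < n) : n • (⊤ : WithTop Γ) = ⊤ := by
  induction n with
  | zero => exact absurd hn (lt_irrefl 0)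
  | succ m ih =>
    rw [succ_nsmul]
    exact add_top _

/-- Let `(K,v)` be a henselian valued field, and let
`F(X,Y) = Xⁿ + c_{n-1}X^{n-1}Y + ⋯ + c₀Yⁿ` be the homogenization of a monic degree-`n`
polynomial with coefficients `cᵢ` in the valuation ring whose reduction has no root in
the residue field (expressed below: `F` takes value `0` at every pair of elements of the
valuation ring which are not both in the maximal ideal).  Then for all `a b : K` and
every positive `γ ∈ Γ`: if `v (F a b) ≥ γ` then `n • v a ≥ γ` and `n • v b ≥ γ`. -/
theorem homogenized_value_bound
    (v : AddValuation K (WithTop Γ))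
    (hH : HenselianLocalRing (valRing v))
    (n : ℕ) (hn : 0 < n) (c : Fin n → K) (hc : ∀ i, 0 ≤ v (c i))
    (hnoroot : ∀ α β : K, 0 ≤ v α → 0 ≤ v β → ¬(0 < v α ∧ 0 < v β) →
      v (α ^ n + ∑ i : Fin n, c i * α ^ (i : ℕ) * β ^ (n - (i : ℕ))) = 0) :
    ∀ a b : K, ∀ γ : Γ, 0 < γ →
      (γ : WithTop Γ) ≤ v (a ^ n + ∑ i : Fin n, c i * a ^ (i : ℕ) * b ^ (n - (i : ℕ))) →
      (γ : WithTop Γ) ≤ n • v a ∧ (γ : WithTop Γ) ≤ n • v b := by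
  intro a b γ hγ hF
  -- deal with the case a = 0 ∧ b = 0 first
  by_cases hab : a = 0 ∧ b = 0
  · obtain ⟨ha, hb⟩ := hab
    subst ha; subst hb
    simp [v.map_zero, nsmul_top_eq hn, le_top]
  -- choose t = the one of a, b with the smaller valuation
  have key : ∀ t : K, t ≠ 0 → v t ≤ v a → v t ≤ v b → (t = a ∨ t = b) →
      (γ : WithTop Γ) ≤ n • v a ∧ (γ : WithTop Γ) ≤ n • v b := by
    intro t ht hta htb htab
    set α := a * t⁻¹ with hα
    set β := b * t⁻¹ with hβ
    have hvt : v t ≠ ⊤ := (v.ne_top_iff).2 ht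
    have hvinv : v t⁻¹ = - v t := by
      have h1 : v t + v t⁻¹ = 0 := by
        rw [← v.map_mul, mul_inv_cancel₀ ht, v.map_one]
      lift v t to Γ using hvt with g hg
      have hvinv' : v t⁻¹ ≠ ⊤ := by
        intro h; rw [h] at h1; simp at h1
      lift v t⁻¹ to Γ using hvinv' with g' hg'
      rw [← WithTop.coe_add, ← WithTop.coe_zero, WithTop.coe_inj] at h1
      rw [← WithTop.LinearOrderedAddCommGroup.coe_neg, WithTop.coe_inj]
      exact neg_eq_of_add_eq_zero_right h1 ▸ rfl
    have hvα : 0 ≤ v α := by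
      rw [hα, v.map_mul, hvinv]
      lift v t to Γ using hvt with g hg
      rcases eq_or_ne (v a) ⊤ with h | h
      · simp [h]
      · lift v a to Γ using h with ga
        rw [← WithTop.LinearOrderedAddCommGroup.coe_neg, ← WithTop.coe_add, ← WithTop.coe_zero, WithTop.coe_le_coe]
        rw [WithTop.coe_le_coe] at hta
        rw [← sub_eq_add_neg]
        exact sub_nonneg.2 hta
    have hvβ : 0 ≤ v β := by
      rw [hβ, v.map_mul, hvinv]
      lift v t to Γ using hvt with g hg
      rcases eq_or_ne (v b) ⊤ with h | h
      · simp [h]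
      · lift v b to Γ using h with gb
        rw [← WithTop.LinearOrderedAddCommGroup.coe_neg, ← WithTop.coe_add, ← WithTop.coe_zero, WithTop.coe_le_coe]
        rw [WithTop.coe_le_coe] at htb
        rw [← sub_eq_add_neg]
        exact sub_nonneg.2 htb
    have hnb : ¬(0 < v α ∧ 0 < v β) := by
      rintro ⟨h1, h2⟩
      rcases htab with rfl | rfl
      · rw [hα, mul_inv_cancel₀ ht, v.map_one] at h1; exact lt_irrefl _ h1
      · rw [hβ, mul_inv_cancel₀ ht, v.map_one] at h2; exact lt_irrefl _ h2
    have hroot := hnoroot α β hvα hvβ hnb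
    -- F(a,b) = t^n * F(α,β)
    have hfac : a ^ n + ∑ i : Fin n, c i * a ^ (i : ℕ) * b ^ (n - (i : ℕ))
        = t ^ n * (α ^ n + ∑ i : Fin n, c i * α ^ (i : ℕ) * β ^ (n - (i : ℕ))) := by
      rw [mul_add, Finset.mul_sum]
      congr 1
      · rw [hα]; field_simp
        rw [div_pow, mul_div_assoc', mul_div_cancel_left₀ _ (pow_ne_zero n ht)]
      · refine Finset.sum_congr rfl fun i _ => ?_
        have hi : (i : ℕ) + (n - (i : ℕ)) = n := Nat.add_sub_cancel' (le_of_lt i.isLt)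
        rw [hα, hβ, mul_pow, mul_pow]
        have : t ^ n = t ^ (i : ℕ) * t ^ (n - (i : ℕ)) := by rw [← pow_add, hi]
        rw [this]
        field_simp
        have h1 : t ^ (i : ℕ) * (1 / t) ^ (i : ℕ) = 1 := by rw [← mul_pow, mul_one_div_cancel ht, one_pow]
        have h2 : t ^ (n - (i : ℕ)) * (1 / t) ^ (n - (i : ℕ)) = 1 := by rw [← mul_pow, mul_one_div_cancel ht, one_pow]
        linear_combination (-(c i * a ^ (i : ℕ) * b ^ (n - (i : ℕ)) * t ^ (n - (i : ℕ)) * (1 / t) ^ (n - (i : ℕ)))) * h1 - (c i * a ^ (i : ℕ) * b ^ (n - (i : ℕ))) * h2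
    rw [hfac, v.map_mul, v.map_pow, hroot, add_zero] at hF
    constructor
    · exact hF.trans (nsmul_le_nsmul_right hta n)
    · exact hF.trans (nsmul_le_nsmul_right htb n)
  rcases le_total (v a) (v b) with h | h
  · have ha : a ≠ 0 := by
      intro h0
      apply hab
      refine ⟨h0, ?_⟩
      rw [h0, v.map_zero, top_le_iff] at h
      exact (v.top_iff).1 h
    exact key a ha le_rfl h (Or.inl rfl)
  · have hb : b ≠ 0 := by
      intro h0
      apply hab
      refine ⟨?_, h0⟩
      rw [h0, v.map_zero, top_le_iff] at h
      exact (v.top_iff).1 h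
    exact key b hb h le_rfl (Or.inr rfl)
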